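/- Let k be a field, A an associative unital k-algebra, A^e = A ⊗_k A^{op}, and M an A-bimodule (left A^e-module). Let Der(A, M) be the k-vector space of derivations A → M, and let Inn(A, M) ⊆ Der(A, M) be the subspace of inner derivations, i.e., those of the form a ↦ a • m − m • a for some m ∈ M. Then there is a k-linear isomorphism Der(A, M) / Inn(A, M) ≅ Ext¹_{A^e}(A, M), where Ext is computed in the category of left A^e-modules and A is the A^e-module with (a ⊗ b^{op}) • x = a x b. -/

import Mathlib

/- STATEMENT 9: for an `A`-bimodule (= left `Aᵉ = A ⊗ₖ Aᵐᵒᵖ`-module) `M`, there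
is a `k`-linear isomorphism `Der(A, M) / Inn(A, M) ≅ Ext¹_{Aᵉ}(A, M)`. -/

open TensorProduct MulOpposite CategoryTheory

noncomputable section

set_option synthInstance.maxHeartbeats 1000000
set_option maxHeartbeats 1000000

variable (k : Type) [Field k] (A : Type) [Ring A] [Algebra k A]

/-- `A` as a module over its enveloping algebra `Aᵉ = A ⊗ₖ Aᵐᵒᵖ` (outer action:
`(a ⊗ bᵒᵖ) • x = a * x * b`). -/
instance aeModule : Module (A ⊗[k] Aᵐᵒᵖ) A := TensorProduct.Algebra.module

variable (M : Type) [AddCommGroup M] [Module k M] [Module (A ⊗[k] Aᵐᵒᵖ) M]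
  [IsScalarTower k (A ⊗[k] Aᵐᵒᵖ) M]

/-- A (`k`-linear) derivation from `A` to the `A`-bimodule `M`:
`δ(a b) = a • δ(b) + δ(a) • b`, where `a • m = (a ⊗ 1) • m` and
`m • b = (1 ⊗ bᵒᵖ) • m`. -/
def IsNCDerivation (δ : A →ₗ[k] M) : Prop :=
  ∀ a b : A, δ (a * b) =
    (a ⊗ₜ[k] (1 : Aᵐᵒᵖ)) • δ b + ((1 : A) ⊗ₜ[k] op b) • δ a

/-- The `k`-submodule `Der(A, M)` of derivations inside all `k`-linear maps
`A → M`. -/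
def ncDer : Submodule k (A →ₗ[k] M) where
  carrier := {δ | IsNCDerivation k A M δ}
  zero_mem' := by intro a b; simp
  add_mem' := by
    intro δ₁ δ₂ h₁ h₂ a b
    simp only [LinearMap.add_apply, h₁ a b, h₂ a b, smul_add]
    abel
  smul_mem' := by
    intro c δ h a b
    simp only [LinearMap.smul_apply, h a b, smul_add]
    rw [smul_comm c, smul_comm c]

/-- The inner derivation attached to `m : M`: `a ↦ a • m - m • a`. -/
def ncInner (m : M) : A →ₗ[k] M where
  toFun a := (a ⊗ₜ[k] (1 : Aᵐᵒᵖ)) • m - ((1 : A) ⊗ₜ[k] op a) • m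
  map_add' a a' := by
    simp only [MulOpposite.op_add, TensorProduct.add_tmul, TensorProduct.tmul_add, add_smul]
    abel
  map_smul' c a := by
    simp only [RingHom.id_apply, MulOpposite.op_smul, TensorProduct.tmul_smul,
      ← TensorProduct.smul_tmul', smul_assoc, smul_sub]

lemma ncInner_isDerivation (m : M) : IsNCDerivation k A M (ncInner k A M m) := by
  intro a b
  simp only [ncInner, LinearMap.coe_mk, AddHom.coe_mk, smul_sub, ← mul_smul,
    Algebra.TensorProduct.tmul_mul_tmul, one_mul, mul_one, ← op_mul]
  abel

/-- `m ↦ (inner derivation ad m)` as a `k`-linear map `M → Der(A, M)`; its range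
is the submodule `Inn(A, M)` of inner derivations. -/
def ncInnerHom : M →ₗ[k] ncDer k A M where
  toFun m := ⟨ncInner k A M m, ncInner_isDerivation k A M m⟩
  map_add' m m' := Subtype.ext <| LinearMap.ext fun a => by
    simp only [ncInner, LinearMap.coe_mk, AddHom.coe_mk, Submodule.coe_add,
      LinearMap.add_apply, smul_add]
    abel
  map_smul' c m := Subtype.ext <| LinearMap.ext fun a => by
    simp only [ncInner, LinearMap.coe_mk, AddHom.coe_mk, RingHom.id_apply,
      SetLike.val_smul, LinearMap.smul_apply, smul_sub]
    rw [smul_comm _ c, smul_comm _ c]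


/-! ### Auxiliary development -/

set_option maxRecDepth 10000

attribute [local instance 3000] Semiring.toModule

section Aux


/-- The multiplication map `Aᵉ → A`, `x ↦ x • 1`, which is `Aᵉ`-linear. -/
def aeMulHom : (A ⊗[k] Aᵐᵒᵖ) →ₗ[A ⊗[k] Aᵐᵒᵖ] A :=
  LinearMap.toSpanSingleton (A ⊗[k] Aᵐᵒᵖ) A (1 : A)

lemma ae_tmul_smul (a : A) (b : Aᵐᵒᵖ) (x : A) :
    (a ⊗ₜ[k] b) • x = a * (x * b.unop) := rfl

lemma aeMulHom_tmul (a : A) (b : Aᵐᵒᵖ) : aeMulHom k A (a ⊗ₜ[k] b) = a * b.unop := by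
  show (a ⊗ₜ[k] b) • (1 : A) = a * b.unop
  rw [ae_tmul_smul, one_mul]

instance : IsScalarTower k (A ⊗[k] Aᵐᵒᵖ) A := by
  constructor
  intro c r x
  rw [show (c • r : A ⊗[k] Aᵐᵒᵖ) = (algebraMap k (A ⊗[k] Aᵐᵒᵖ) c) * r from Algebra.smul_def c r,
    mul_smul]
  have h1 : algebraMap k (A ⊗[k] Aᵐᵒᵖ) c • (r • x) =
      ((algebraMap k A c) ⊗ₜ[k] (1 : Aᵐᵒᵖ)) • (r • x) := by
    rw [Algebra.TensorProduct.algebraMap_apply]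
  rw [h1, ae_tmul_smul, unop_one, mul_one, ← Algebra.smul_def]

lemma aeMulHom_surjective : Function.Surjective (aeMulHom k A) := fun a =>
  ⟨a ⊗ₜ[k] 1, by rw [aeMulHom_tmul, unop_one, mul_one]⟩

/-- The kernel of the multiplication map. -/
def kerMul : Submodule (A ⊗[k] Aᵐᵒᵖ) (A ⊗[k] Aᵐᵒᵖ) := LinearMap.ker (aeMulHom k A)

lemma mem_kerMul {x : A ⊗[k] Aᵐᵒᵖ} : x ∈ kerMul k A ↔ aeMulHom k A x = 0 :=
  LinearMap.mem_ker

/-- `a ↦ a ⊗ 1 - 1 ⊗ aᵒᵖ` as a `k`-linear map into `kerMul`. -/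
def jTo : A →ₗ[k] ↥(kerMul k A) where
  toFun a := ⟨a ⊗ₜ[k] (1 : Aᵐᵒᵖ) - (1 : A) ⊗ₜ[k] op a, by
    rw [mem_kerMul, map_sub, aeMulHom_tmul, aeMulHom_tmul, unop_one, mul_one,
      unop_op, one_mul, sub_self]⟩
  map_add' a a' := Subtype.ext <| by
    simp only [Submodule.coe_add, MulOpposite.op_add, TensorProduct.add_tmul,
      TensorProduct.tmul_add]
    abel
  map_smul' c a := Subtype.ext <| by
    simp only [RingHom.id_apply, Submodule.coe_smul_of_tower, MulOpposite.op_smul,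
      TensorProduct.tmul_smul, ← TensorProduct.smul_tmul', smul_sub]

lemma jTo_coe (a : A) :
    (jTo k A a : A ⊗[k] Aᵐᵒᵖ) = a ⊗ₜ[k] (1 : Aᵐᵒᵖ) - (1 : A) ⊗ₜ[k] op a := rfl

/-- For a `k`-linear map `δ : A → M`, the `k`-linear map `Aᵉ → M`,
`a ⊗ bᵒᵖ ↦ (1 ⊗ bᵒᵖ) • δ a`. -/
def phiAux (δ : A →ₗ[k] M) : (A ⊗[k] Aᵐᵒᵖ) →ₗ[k] M :=
  TensorProduct.lift (LinearMap.mk₂ k (fun a b => ((1 : A) ⊗ₜ[k] b) • δ a)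
    (fun a a' b => by
      show ((1 : A) ⊗ₜ[k] b) • δ (a + a') = ((1 : A) ⊗ₜ[k] b) • δ a + ((1 : A) ⊗ₜ[k] b) • δ a'
      rw [map_add, smul_add])
    (fun c a b => by
      show ((1 : A) ⊗ₜ[k] b) • δ (c • a) = c • (((1 : A) ⊗ₜ[k] b) • δ a)
      rw [map_smul, smul_comm])
    (fun a b b' => by
      show ((1 : A) ⊗ₜ[k] (b + b')) • δ a = ((1 : A) ⊗ₜ[k] b) • δ a + ((1 : A) ⊗ₜ[k] b') • δ a
      rw [TensorProduct.tmul_add, add_smul])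
    (fun c a b => by
      show ((1 : A) ⊗ₜ[k] (c • b)) • δ a = c • (((1 : A) ⊗ₜ[k] b) • δ a)
      rw [TensorProduct.tmul_smul, smul_assoc]))

lemma phiAux_tmul (δ : A →ₗ[k] M) (a : A) (b : Aᵐᵒᵖ) :
    phiAux k A M δ (a ⊗ₜ[k] b) = ((1 : A) ⊗ₜ[k] b) • δ a := rfl

lemma phiAux_mul (δ : A →ₗ[k] M) (hδ : IsNCDerivation k A M δ)
    (r x : A ⊗[k] Aᵐᵒᵖ) :
    phiAux k A M δ (r * x) =
      r • phiAux k A M δ x +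
        phiAux k A M δ (r * ((1 : A) ⊗ₜ[k] op (aeMulHom k A x))) := by
  induction r using TensorProduct.induction_on with
  | zero => simp; exact (zero_smul (A ⊗[k] Aᵐᵒᵖ) (phiAux k A M δ x)).symm
  | add r r' hr hr' =>
    simp only [add_mul, map_add, add_smul, hr, hr']
    abel
  | tmul c e =>
    induction x using TensorProduct.induction_on with
    | zero => simp
    | add x y hx hy =>
      simp only [mul_add, map_add, smul_add, MulOpposite.op_add, TensorProduct.tmul_add, hx, hy]
      abel
    | tmul a b =>
      rw [Algebra.TensorProduct.tmul_mul_tmul, aeMulHom_tmul,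
        Algebra.TensorProduct.tmul_mul_tmul, phiAux_tmul, phiAux_tmul, phiAux_tmul,
        hδ c a, smul_add, ← mul_smul, ← mul_smul, ← mul_smul,
        Algebra.TensorProduct.tmul_mul_tmul, Algebra.TensorProduct.tmul_mul_tmul,
        Algebra.TensorProduct.tmul_mul_tmul]
      simp only [one_mul, mul_one, MulOpposite.op_mul, MulOpposite.op_unop, mul_assoc]

/-- The `Aᵉ`-linear map `kerMul → M` attached to a derivation `δ`. -/
def phiDer (δ : ↥(ncDer k A M)) : ↥(kerMul k A) →ₗ[A ⊗[k] Aᵐᵒᵖ] M where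
  toFun x := phiAux k A M δ.1 x.1
  map_add' x y := by
    show phiAux k A M δ.1 ((x + y : ↥(kerMul k A)) : A ⊗[k] Aᵐᵒᵖ) = _
    rw [Submodule.coe_add, map_add]
  map_smul' r x := by
    have hx : aeMulHom k A x.1 = 0 := (mem_kerMul k A).1 x.2
    have h := phiAux_mul k A M δ.1 δ.2 r x.1
    rw [hx, op_zero, TensorProduct.tmul_zero, mul_zero, map_zero, add_zero] at h
    show phiAux k A M δ.1 ((r • x : ↥(kerMul k A)) : A ⊗[k] Aᵐᵒᵖ) = r • phiAux k A M δ.1 x.1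
    have hc : ((r • x : ↥(kerMul k A)) : A ⊗[k] Aᵐᵒᵖ) = r * (x : A ⊗[k] Aᵐᵒᵖ) := rfl
    rw [hc, h]

lemma phiAux_add (δ δ' : A →ₗ[k] M) (y : A ⊗[k] Aᵐᵒᵖ) :
    phiAux k A M (δ + δ') y = phiAux k A M δ y + phiAux k A M δ' y := by
  induction y using TensorProduct.induction_on with
  | zero => rw [map_zero, map_zero, map_zero, add_zero]
  | add x y hx hy => rw [map_add, map_add, map_add, hx, hy]; abel
  | tmul a b => rw [phiAux_tmul, phiAux_tmul, phiAux_tmul, LinearMap.add_apply, smul_add]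

lemma phiAux_ksmul (c : k) (δ : A →ₗ[k] M) (y : A ⊗[k] Aᵐᵒᵖ) :
    phiAux k A M (c • δ) y = c • phiAux k A M δ y := by
  induction y using TensorProduct.induction_on with
  | zero => rw [map_zero, map_zero, smul_zero]
  | add x y hx hy => rw [map_add, map_add, hx, hy, smul_add]
  | tmul a b => rw [phiAux_tmul, phiAux_tmul, LinearMap.smul_apply, smul_comm]

/-- The derivation attached to an `Aᵉ`-linear map `kerMul → M`. -/
def psiDer (φ : ↥(kerMul k A) →ₗ[A ⊗[k] Aᵐᵒᵖ] M) : A →ₗ[k] M :=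
  (φ.restrictScalars k).comp (jTo k A)

lemma psiDer_apply (φ : ↥(kerMul k A) →ₗ[A ⊗[k] Aᵐᵒᵖ] M) (a : A) :
    psiDer k A M φ a = φ (jTo k A a) := rfl

lemma jTo_mul (a b : A) : jTo k A (a * b) =
    (a ⊗ₜ[k] (1 : Aᵐᵒᵖ)) • jTo k A b + ((1 : A) ⊗ₜ[k] op b) • jTo k A a := by
  apply Subtype.ext
  show ((a * b) ⊗ₜ[k] (1 : Aᵐᵒᵖ) - (1 : A) ⊗ₜ[k] op (a * b) : A ⊗[k] Aᵐᵒᵖ) =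
    (a ⊗ₜ[k] (1 : Aᵐᵒᵖ)) * (b ⊗ₜ[k] (1 : Aᵐᵒᵖ) - (1 : A) ⊗ₜ[k] op b) +
      ((1 : A) ⊗ₜ[k] op b) * (a ⊗ₜ[k] (1 : Aᵐᵒᵖ) - (1 : A) ⊗ₜ[k] op a)
  rw [mul_sub, mul_sub, Algebra.TensorProduct.tmul_mul_tmul,
    Algebra.TensorProduct.tmul_mul_tmul, Algebra.TensorProduct.tmul_mul_tmul,
    Algebra.TensorProduct.tmul_mul_tmul]
  rw [mul_one, one_mul, mul_one, one_mul, mul_one, one_mul, ← MulOpposite.op_mul]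
  abel

lemma psiDer_isDer (φ : ↥(kerMul k A) →ₗ[A ⊗[k] Aᵐᵒᵖ] M) :
    IsNCDerivation k A M (psiDer k A M φ) := by
  intro a b
  rw [psiDer_apply, psiDer_apply, psiDer_apply, jTo_mul, map_add, map_smul, map_smul]

lemma isNCDerivation_one {δ : A →ₗ[k] M} (hδ : IsNCDerivation k A M δ) : δ 1 = 0 := by
  have h := hδ 1 1
  rw [mul_one, op_one, ← Algebra.TensorProduct.one_def, one_smul] at h
  exact (left_eq_add.1 h)

lemma psiDer_phiDer (δ : ↥(ncDer k A M)) : psiDer k A M (phiDer k A M δ) = δ.1 := by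
  ext a
  rw [psiDer_apply]
  show phiAux k A M δ.1 (jTo k A a : A ⊗[k] Aᵐᵒᵖ) = δ.1 a
  rw [jTo_coe, map_sub, phiAux_tmul, phiAux_tmul, isNCDerivation_one k A M δ.2,
    smul_zero, sub_zero, ← Algebra.TensorProduct.one_def, one_smul]

/-- `y ↦ y - 1 ⊗ (μ y)ᵒᵖ`, a `k`-linear map into `kerMul`. -/
def pMap : (A ⊗[k] Aᵐᵒᵖ) →ₗ[k] ↥(kerMul k A) where
  toFun y := ⟨y - (1 : A) ⊗ₜ[k] op (aeMulHom k A y), by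
    rw [mem_kerMul, map_sub, aeMulHom_tmul, unop_op, one_mul, sub_self]⟩
  map_add' y y' := Subtype.ext <| by
    simp only [Submodule.coe_add, map_add, MulOpposite.op_add, TensorProduct.tmul_add]
    abel
  map_smul' c y := Subtype.ext <| by
    simp only [RingHom.id_apply, Submodule.coe_smul_of_tower, LinearMap.map_smul_of_tower,
      MulOpposite.op_smul, TensorProduct.tmul_smul, smul_sub]

lemma pMap_coe (y : A ⊗[k] Aᵐᵒᵖ) :
    (pMap k A y : A ⊗[k] Aᵐᵒᵖ) = y - (1 : A) ⊗ₜ[k] op (aeMulHom k A y) := rfl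

lemma pMap_of_mem {x : A ⊗[k] Aᵐᵒᵖ} (hx : x ∈ kerMul k A) :
    pMap k A x = ⟨x, hx⟩ := by
  apply Subtype.ext
  rw [pMap_coe, (mem_kerMul k A).1 hx, op_zero, TensorProduct.tmul_zero, sub_zero]

lemma phiAux_psiDer (φ : ↥(kerMul k A) →ₗ[A ⊗[k] Aᵐᵒᵖ] M) (y : A ⊗[k] Aᵐᵒᵖ) :
    phiAux k A M (psiDer k A M φ) y = φ (pMap k A y) := by
  induction y using TensorProduct.induction_on with
  | zero => simp
  | add x y hx hy => rw [map_add, map_add, map_add, hx, hy]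
  | tmul a b =>
    rw [phiAux_tmul, psiDer_apply, ← map_smul]
    congr 1
    apply Subtype.ext
    show ((1 : A) ⊗ₜ[k] b : A ⊗[k] Aᵐᵒᵖ) * ((jTo k A a : A ⊗[k] Aᵐᵒᵖ)) =
      ((pMap k A (a ⊗ₜ[k] b) : A ⊗[k] Aᵐᵒᵖ))
    rw [jTo_coe, pMap_coe, aeMulHom_tmul, mul_sub,
      Algebra.TensorProduct.tmul_mul_tmul, Algebra.TensorProduct.tmul_mul_tmul,
      one_mul, one_mul, mul_one, MulOpposite.op_mul, MulOpposite.op_unop]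

lemma phiDer_psiDer (φ : ↥(kerMul k A) →ₗ[A ⊗[k] Aᵐᵒᵖ] M)
    (hφ : IsNCDerivation k A M (psiDer k A M φ)) :
    phiDer k A M ⟨psiDer k A M φ, hφ⟩ = φ := by
  ext x
  show phiAux k A M (psiDer k A M φ) x.1 = φ x
  rw [phiAux_psiDer, pMap_of_mem k A x.2]

/-- Derivations are the same as `Aᵉ`-linear maps `kerMul → M`. -/
def derEquivHom : ↥(ncDer k A M) ≃ₗ[k] (↥(kerMul k A) →ₗ[A ⊗[k] Aᵐᵒᵖ] M) where
  toFun δ := phiDer k A M δ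
  invFun φ := ⟨psiDer k A M φ, psiDer_isDer k A M φ⟩
  map_add' δ δ' := by
    ext x
    exact phiAux_add k A M δ.1 δ'.1 x.1
  map_smul' c δ := by
    ext x
    exact phiAux_ksmul k A M c δ.1 x.1
  left_inv δ := Subtype.ext (psiDer_phiDer k A M δ)
  right_inv φ := phiDer_psiDer k A M φ _

/-- The inner `Aᵉ`-linear map `kerMul → M` attached to `m : M`. -/
def rhoInner (m : M) : ↥(kerMul k A) →ₗ[A ⊗[k] Aᵐᵒᵖ] M :=
  (LinearMap.toSpanSingleton (A ⊗[k] Aᵐᵒᵖ) M m).comp (kerMul k A).subtype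

lemma rhoInner_apply (m : M) (x : ↥(kerMul k A)) :
    rhoInner k A M m x = (x : A ⊗[k] Aᵐᵒᵖ) • m := rfl

lemma psiDer_rhoInner (m : M) :
    psiDer k A M (rhoInner k A M m) = (ncInnerHom k A M m).1 := by
  ext a
  rw [psiDer_apply, rhoInner_apply, jTo_coe, sub_smul]
  rfl

lemma derEquivHom_inner (m : M) :
    derEquivHom k A M (ncInnerHom k A M m) = rhoInner k A M m := by
  rw [← (derEquivHom k A M).apply_symm_apply (rhoInner k A M m)]
  congr 1
  show ncInnerHom k A M m =
    (⟨psiDer k A M (rhoInner k A M m), psiDer_isDer k A M _⟩ : ↥(ncDer k A M))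
  exact Subtype.ext (psiDer_rhoInner k A M m).symm

/-! ### The projective resolution of `A` over `Aᵉ` -/

/-- The multiplication map as a morphism in `ModuleCat (Aᵉ)`. -/
def muCat : ModuleCat.of (A ⊗[k] Aᵐᵒᵖ) (A ⊗[k] Aᵐᵒᵖ) ⟶ ModuleCat.of (A ⊗[k] Aᵐᵒᵖ) A :=
  ModuleCat.ofHom (aeMulHom k A)

instance : Epi (muCat k A) :=
  (ModuleCat.epi_iff_surjective _).2 (aeMulHom_surjective k A)

instance : Projective (ModuleCat.of (A ⊗[k] Aᵐᵒᵖ) (A ⊗[k] Aᵐᵒᵖ)) :=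
  (IsProjective.iff_projective _).1 inferInstance

/-- A projective resolution of `A` over `Aᵉ`, built from the multiplication map. -/
def hochComplex : ChainComplex (ModuleCat (A ⊗[k] Aᵐᵒᵖ)) ℕ :=
  ChainComplex.mk' (ModuleCat.of (A ⊗[k] Aᵐᵒᵖ) (A ⊗[k] Aᵐᵒᵖ)) (Projective.syzygies (muCat k A))
    (Projective.d (muCat k A)) (fun f => ⟨_, Projective.d f, (Category.assoc _ _ _).trans ((congrArg _ (Limits.kernel.condition _)).trans Limits.comp_zero)⟩)

lemma hochComplex_d_1_0 : (hochComplex k A).d 1 0 = Projective.d (muCat k A) := by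
  simp [hochComplex]

lemma hochComplex_exactAt_succ (n : ℕ) : (hochComplex k A).ExactAt (n + 1) := by
  rw [HomologicalComplex.exactAt_iff' _ (n + 1 + 1) (n + 1) n (by simp) (by simp)]
  have h := CategoryTheory.exact_d_f ((hochComplex k A).d (n + 1) n)
  refine (ShortComplex.exact_iff_of_iso ?_).2 h
  refine ShortComplex.isoMk (ChainComplex.mk'XIso (V := ModuleCat (A ⊗[k] Aᵐᵒᵖ)) (ModuleCat.of (A ⊗[k] Aᵐᵒᵖ) (A ⊗[k] Aᵐᵒᵖ))
    (Projective.syzygies (muCat k A)) (Projective.d (muCat k A))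
    (fun {X₀ X₁ : ModuleCat (A ⊗[k] Aᵐᵒᵖ)} (f : X₁ ⟶ X₀) => ⟨_, Projective.d f,
      (Category.assoc _ _ _).trans ((congrArg (Projective.π (Limits.kernel f) ≫ ·)
        (Limits.kernel.condition f)).trans Limits.comp_zero)⟩) n) (Iso.refl _) (Iso.refl _) ?_ ?_
  · exact (ChainComplex.mk'_d (V := ModuleCat (A ⊗[k] Aᵐᵒᵖ)) (ModuleCat.of (A ⊗[k] Aᵐᵒᵖ) (A ⊗[k] Aᵐᵒᵖ))
      (Projective.syzygies (muCat k A)) (Projective.d (muCat k A)) _ n).symm.trans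
        (Category.comp_id _).symm
  · exact (Category.id_comp _).trans (Category.comp_id _).symm

instance hochComplex_projective (n : ℕ) : Projective ((hochComplex k A).X n) := by
  obtain (_ | _ | _ | n) := n
  · exact inferInstanceAs (Projective (ModuleCat.of (A ⊗[k] Aᵐᵒᵖ) (A ⊗[k] Aᵐᵒᵖ)))
  all_goals apply Projective.projective_over

lemma hochComplex_d_comp_mu : (hochComplex k A).d 1 0 ≫ muCat k A = 0 := by
  rw [hochComplex_d_1_0]; exact (Category.assoc _ _ _).trans ((congrArg _ (Limits.kernel.condition _)).trans Limits.comp_zero)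

/-- The projective resolution of `A` over `Aᵉ`. -/
def hochRes : ProjectiveResolution (ModuleCat.of (A ⊗[k] Aᵐᵒᵖ) A) where
  complex := hochComplex k A
  π := (ChainComplex.toSingle₀Equiv _ _).symm ⟨muCat k A, hochComplex_d_comp_mu k A⟩
  quasiIso := ⟨fun n => by
    cases n with
    | zero =>
      rw [ChainComplex.quasiIsoAt₀_iff, ShortComplex.quasiIso_iff_of_zeros']
      · refine (ShortComplex.exact_and_epi_g_iff_of_iso ?_).2
          ⟨CategoryTheory.exact_d_f (muCat k A), inferInstance⟩
        exact ShortComplex.isoMk (Iso.refl _) (Iso.refl _) (Iso.refl _)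
          ((Category.id_comp _).trans (Category.comp_id _).symm) ((Category.id_comp _).trans (Category.comp_id _).symm)
      all_goals rfl
    | succ n =>
      rw [quasiIsoAt_iff_exactAt']
      · apply hochComplex_exactAt_succ
      · apply ChainComplex.exactAt_succ_single_obj⟩

/-! ### Identifying the degree-1 homology of the Hom complex -/

/-- The Hom cochain complex `Hom(P•, M)`. -/
def homCx : CochainComplex (ModuleCat k) ℕ :=
  (hochComplex k A).linearYonedaObj k (ModuleCat.of (A ⊗[k] Aᵐᵒᵖ) M)

/-- The short complex in degrees `0, 1, 2` of the Hom complex. -/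
def homS : ShortComplex (ModuleCat k) := (homCx k A M).sc' 0 1 2

lemma homS_f_apply (g : (hochComplex k A).X 0 ⟶ ModuleCat.of (A ⊗[k] Aᵐᵒᵖ) M) :
    (homS k A M).f g = (hochComplex k A).d 1 0 ≫ g := rfl

lemma homS_g_apply (f : (hochComplex k A).X 1 ⟶ ModuleCat.of (A ⊗[k] Aᵐᵒᵖ) M) :
    (homS k A M).g f = (hochComplex k A).d 2 1 ≫ f := rfl

/-- Corestriction of `d 1 0` to `kerMul`. -/
def kappa : ((hochComplex k A).X 1 : Type) →ₗ[A ⊗[k] Aᵐᵒᵖ] ↥(kerMul k A) :=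
  LinearMap.codRestrict (kerMul k A) ((hochComplex k A).d 1 0).hom (fun x => by
    rw [mem_kerMul]
    exact LinearMap.congr_fun (congrArg ModuleCat.Hom.hom (hochComplex_d_comp_mu k A)) x)

lemma kappa_coe (x : (hochComplex k A).X 1) :
    (kappa k A x : A ⊗[k] Aᵐᵒᵖ) = (hochComplex k A).d 1 0 x := rfl

lemma kappa_surjective : Function.Surjective (kappa k A) := by
  intro y
  have hex := (((hochComplex k A).exactAt_iff' 2 1 0 (by simp) (by simp)).1
    (hochComplex_exactAt_succ k A 0))
  have h0 : aeMulHom k A y.1 = 0 := (mem_kerMul k A).1 y.2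
  have hone : ((ShortComplex.mk (Projective.d (muCat k A)) (muCat k A)
      ((Category.assoc _ _ _).trans ((congrArg _ (Limits.kernel.condition _)).trans Limits.comp_zero))).Exact) := CategoryTheory.exact_d_f (muCat k A)
  rw [ShortComplex.moduleCat_exact_iff] at hone
  obtain ⟨x, hx⟩ := hone y.1 h0
  refine ⟨x, Subtype.ext ?_⟩
  show ((hochComplex k A).d 1 0).hom x = y.1
  rw [hochComplex_d_1_0]
  exact hx

/-- Reinterpret an element of the degree-1 hom module. -/
def toHom1 (f : (homS k A M).X₂) :
    ((hochComplex k A).X 1 : Type) →ₗ[A ⊗[k] Aᵐᵒᵖ] M := f.hom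

/-- Reinterpret an element of the degree-0 hom module. -/
def toHom0 (g : (homS k A M).X₁) :
    (A ⊗[k] Aᵐᵒᵖ) →ₗ[A ⊗[k] Aᵐᵒᵖ] M := g.hom

lemma kerkappa_le (f : ((hochComplex k A).X 1 : Type) →ₗ[A ⊗[k] Aᵐᵒᵖ] M)
    (hf : ∀ y, f ((hochComplex k A).d 2 1 y) = 0) :
    ∀ x, kappa k A x = 0 → f x = 0 := by
  intro x hx
  have hex := (((hochComplex k A).exactAt_iff' 2 1 0 (by simp) (by simp)).1
    (hochComplex_exactAt_succ k A 0))
  rw [ShortComplex.moduleCat_exact_iff] at hex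
  have hx' : (hochComplex k A).d 1 0 x = 0 := by
    rw [← kappa_coe, hx]; rfl
  obtain ⟨y, hy⟩ := hex x hx'
  rw [← hy]
  exact hf y

end Aux

section Homological

/-- The map sending an `Aᵉ`-linear map `kerMul → M` to a 1-cocycle. -/
def kappaHom : (↥(kerMul k A) →ₗ[A ⊗[k] Aᵐᵒᵖ] M) →ₗ[k] ↥(LinearMap.ker (homS k A M).g.hom) where
  toFun φ := ⟨ModuleCat.ofHom (φ.comp (kappa k A)), LinearMap.mem_ker.2 (ModuleCat.hom_ext <| LinearMap.ext fun y => by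
    show φ (kappa k A ((hochComplex k A).d 2 1 y)) = 0
    have h0 : kappa k A ((hochComplex k A).d 2 1 y) = 0 := by
      apply Subtype.ext
      rw [kappa_coe]
      exact LinearMap.congr_fun (congrArg ModuleCat.Hom.hom ((hochComplex k A).d_comp_d 2 1 0)) y
    rw [h0, map_zero])⟩
  map_add' φ φ' := Subtype.ext <| ModuleCat.hom_ext <| LinearMap.ext fun x => rfl
  map_smul' c φ := Subtype.ext <| ModuleCat.hom_ext <| LinearMap.ext fun x =>
    (algebraMap_smul (A ⊗[k] Aᵐᵒᵖ) c (φ (kappa k A x))).symm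

lemma kappaHom_injective : Function.Injective (kappaHom k A M) := by
  intro φ φ' h
  apply LinearMap.ext
  intro y
  obtain ⟨x, rfl⟩ := kappa_surjective k A y
  have h1 : (kappaHom k A M φ).1 = (kappaHom k A M φ').1 := congrArg Subtype.val h
  exact LinearMap.congr_fun (congrArg ModuleCat.Hom.hom h1) x

lemma descend {R : Type} [Ring R] {X Y Z : Type} [AddCommGroup X] [AddCommGroup Y]
    [AddCommGroup Z] [Module R X] [Module R Y] [Module R Z]
    (κl : X →ₗ[R] Y) (hs : Function.Surjective κl) (fl : X →ₗ[R] Z)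
    (hle : LinearMap.ker κl ≤ LinearMap.ker fl) :
    ∃ φ : Y →ₗ[R] Z, ∀ x, φ (κl x) = fl x := by
  refine ⟨((LinearMap.ker κl).liftQ fl hle).comp
    (κl.quotKerEquivOfSurjective hs).symm.toLinearMap, fun x => ?_⟩
  have h1 : (κl.quotKerEquivOfSurjective hs).symm (κl x) = Submodule.Quotient.mk x := by
    rw [LinearEquiv.symm_apply_eq]
    rfl
  show ((LinearMap.ker κl).liftQ fl hle) ((κl.quotKerEquivOfSurjective hs).symm (κl x)) = fl x
  rw [h1]
  rfl

/-- The `d 2 1` differential, as a plain linear map. -/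
def d21l : ((hochComplex k A).X 2 : Type) →ₗ[A ⊗[k] Aᵐᵒᵖ] ((hochComplex k A).X 1 : Type) :=
  ((hochComplex k A).d 2 1).hom

lemma kappaHom_surjective : Function.Surjective (kappaHom k A M) := by
  rintro ⟨f, hf⟩
  have h0 : (homS k A M).g.hom f = 0 := LinearMap.mem_ker.1 hf
  have hg : (toHom1 k A M f).comp (d21l k A) = 0 := congrArg ModuleCat.Hom.hom h0
  have hf' : ∀ y, toHom1 k A M f ((hochComplex k A).d 2 1 y) = 0 := fun y =>
    LinearMap.congr_fun hg y
  have hle : LinearMap.ker (kappa k A) ≤ LinearMap.ker (toHom1 k A M f) := fun x hx =>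
    LinearMap.mem_ker.2 (kerkappa_le k A M (toHom1 k A M f) hf' x (LinearMap.mem_ker.1 hx))
  obtain ⟨φ, hφ⟩ := descend (R := A ⊗[k] Aᵐᵒᵖ) (X := (hochComplex k A).X 1) (Y := ↥(kerMul k A))
    (Z := M) (kappa k A) (kappa_surjective k A) (toHom1 k A M f) hle
  exact ⟨φ, Subtype.ext (ModuleCat.hom_ext (LinearMap.ext hφ))⟩

/-- Bundled: `Aᵉ`-linear maps `kerMul → M` are 1-cocycles. -/
def kappaEquiv : (↥(kerMul k A) →ₗ[A ⊗[k] Aᵐᵒᵖ] M) ≃ₗ[k] ↥(LinearMap.ker (homS k A M).g.hom) :=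
  LinearEquiv.ofBijective (kappaHom k A M) ⟨kappaHom_injective k A M, kappaHom_surjective k A M⟩

/-- The total equivalence from derivations to 1-cocycles. -/
def derEquivCocycle : ↥(ncDer k A M) ≃ₗ[k] ↥(LinearMap.ker (homS k A M).g.hom) :=
  (derEquivHom k A M).trans (kappaEquiv k A M)

lemma cocycle_inner_val (m : M) :
    ((derEquivCocycle k A M (ncInnerHom k A M m)) : (homS k A M).X₂) =
      (homS k A M).f (ModuleCat.ofHom (LinearMap.toSpanSingleton (A ⊗[k] Aᵐᵒᵖ) M m)) := by
  have h2 := derEquivHom_inner k A M m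
  show ModuleCat.ofHom ((derEquivHom k A M (ncInnerHom k A M m)).comp (kappa k A) :
    ((hochComplex k A).X 1 : Type) →ₗ[A ⊗[k] Aᵐᵒᵖ] M) = _
  rw [h2]
  exact ModuleCat.hom_ext (LinearMap.ext fun x => rfl)

lemma derEquivCocycle_inner (m : M) :
    derEquivCocycle k A M (ncInnerHom k A M m) =
      (homS k A M).moduleCatToCycles (ModuleCat.ofHom (LinearMap.toSpanSingleton (A ⊗[k] Aᵐᵒᵖ) M m)) :=
  Subtype.ext (cocycle_inner_val k A M m)

lemma derEquivCocycle_map_inner :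
    Submodule.map (derEquivCocycle k A M).toLinearMap (LinearMap.range (ncInnerHom k A M)) =
      LinearMap.range (homS k A M).moduleCatToCycles := by
  apply le_antisymm
  · rintro y ⟨δ, ⟨m, rfl⟩, rfl⟩
    exact ⟨ModuleCat.ofHom (LinearMap.toSpanSingleton (A ⊗[k] Aᵐᵒᵖ) M m), (derEquivCocycle_inner k A M m).symm⟩
  · rintro y ⟨g, rfl⟩
    refine ⟨ncInnerHom k A M (toHom0 k A M g 1), ⟨_, rfl⟩, ?_⟩
    rw [LinearEquiv.coe_coe, derEquivCocycle_inner]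
    have hg0 : LinearMap.toSpanSingleton (A ⊗[k] Aᵐᵒᵖ) M (toHom0 k A M g 1) =
        toHom0 k A M g := by
      apply LinearMap.ext_ring
      show (1 : A ⊗[k] Aᵐᵒᵖ) • (toHom0 k A M g 1) = toHom0 k A M g 1
      rw [one_smul]
    have hg : (ModuleCat.ofHom (LinearMap.toSpanSingleton (A ⊗[k] Aᵐᵒᵖ) M (toHom0 k A M g 1)) :
        (homS k A M).X₁) = g := ModuleCat.hom_ext hg0
    rw [hg]

/-- The quotient equivalence. -/
def derQuotEquiv :
    (↥(ncDer k A M) ⧸ LinearMap.range (ncInnerHom k A M)) ≃ₗ[k]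
      (↥(LinearMap.ker (homS k A M).g.hom) ⧸ LinearMap.range (homS k A M).moduleCatToCycles) :=
  Submodule.Quotient.equiv _ _ (derEquivCocycle k A M) (derEquivCocycle_map_inner k A M)

end Homological

/-- `Der(A,M)/Inn(A,M) ≅ Ext¹_{Aᵉ}(A, M)`, `k`-linearly. -/
theorem outer_derivations_iso_ext_one :
    Nonempty ((↥(ncDer k A M) ⧸ LinearMap.range (ncInnerHom k A M)) ≃ₗ[k]
      (((Ext k (ModuleCat (A ⊗[k] Aᵐᵒᵖ)) 1).obj
        (Opposite.op (ModuleCat.of (A ⊗[k] Aᵐᵒᵖ) A))).obj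
          (ModuleCat.of (A ⊗[k] Aᵐᵒᵖ) M))) := by
  exact ⟨(derQuotEquiv k A M).trans
    ((((homS k A M).moduleCatHomologyIso.toLinearEquiv).symm).trans
      (((((homCx k A M).homologyIsoSc' 0 1 2 (by simp) (by simp)).toLinearEquiv).symm).trans
        ((((hochRes k A).isoExt 1 (ModuleCat.of (A ⊗[k] Aᵐᵒᵖ) M)).toLinearEquiv).symm)))⟩
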